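/- arXiv:2409.00939 — 2 statements merged into one kernel-verified Lean document; each statement's English description precedes it below -/
import Mathlib

section
/- The function Q(x) = (1 − (w/(1+w))·(1/|x|)) Q* + (w/(3+w))·(1/|x|³) Q_b(x), with Q* = s(n⊗n − I/3) for a fixed unit vector n, and Q_b(x) = s(x̂⊗x̂ − I/3) where x̂ = x/|x|, is harmonic (each matrix entry is a harmonic function) on ℝ³ \ {0}. -/
noncomputable section

/-- The `i`-th partial derivative of a scalar field on `ℝ³`. -/
def pd (i : Fin 3) (f : EuclideanSpace ℝ (Fin 3) → ℝ) (x : EuclideanSpace ℝ (Fin 3)) : ℝ :=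
  fderiv ℝ f x (EuclideanSpace.single i 1)

/-- The Laplacian of a scalar field on `ℝ³`. -/
def lap (f : EuclideanSpace ℝ (Fin 3) → ℝ) (x : EuclideanSpace ℝ (Fin 3)) : ℝ :=
  ∑ i, pd i (pd i f) x

local notation "E3" => EuclideanSpace ℝ (Fin 3)

lemma hasFDerivAt_norm3 {x : E3} (hx : x ≠ 0) :
    HasFDerivAt (fun y : E3 => ‖y‖) (‖x‖⁻¹ • innerSL ℝ x) x := by
  have h2 : HasFDerivAt (fun y : E3 => ‖y‖ ^ 2) ((2:ℕ) • innerSL ℝ x) x :=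
    (hasStrictFDerivAt_norm_sq x).hasFDerivAt
  have hne : ‖x‖ ^ 2 ≠ 0 := pow_ne_zero _ (norm_ne_zero_iff.mpr hx)
  have h := (Real.hasDerivAt_sqrt hne).comp_hasFDerivAt x h2
  have e1 : (fun y : E3 => Real.sqrt (‖y‖ ^ 2)) = fun y : E3 => ‖y‖ := by
    funext y; exact Real.sqrt_sq (norm_nonneg y)
  rw [Function.comp_def, e1] at h
  have e2 : (1 / (2 * Real.sqrt (‖x‖ ^ 2))) • (2:ℕ) • innerSL ℝ x = ‖x‖⁻¹ • innerSL ℝ x := by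
    ext y
    simp [Real.sqrt_sq (norm_nonneg x)]
    have : ‖x‖ ≠ 0 := norm_ne_zero_iff.mpr hx
    field_simp
  rwa [e2] at h

lemma hasFDerivAt_normZpow (m : ℤ) {x : E3} (hx : x ≠ 0) :
    HasFDerivAt (fun y : E3 => ‖y‖ ^ m) (((m : ℝ) * ‖x‖ ^ (m - 2)) • innerSL ℝ x) x := by
  have hr : ‖x‖ ≠ 0 := norm_ne_zero_iff.mpr hx
  have h := (hasDerivAt_zpow m ‖x‖ (Or.inl hr)).comp_hasFDerivAt x (hasFDerivAt_norm3 hx)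
  rw [Function.comp_def] at h
  have e2 : ((m : ℝ) * ‖x‖ ^ (m - 1)) • ‖x‖⁻¹ • innerSL ℝ x
      = ((m : ℝ) * ‖x‖ ^ (m - 2)) • innerSL ℝ x := by
    rw [smul_smul]
    congr 1
    rw [mul_assoc]
    congr 1
    rw [← zpow_neg_one, ← zpow_add₀ hr]
    congr 1
    omega
  rwa [e2] at h

lemma diff_zpow (m : ℤ) {x : E3} (hx : x ≠ 0) :
    DifferentiableAt ℝ (fun y : E3 => ‖y‖ ^ m) x :=
  (hasFDerivAt_normZpow m hx).differentiableAt

lemma pd_zpow (m : ℤ) (k : Fin 3) {x : E3} (hx : x ≠ 0) :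
    pd k (fun y : E3 => ‖y‖ ^ m) x = (m : ℝ) * ‖x‖ ^ (m - 2) * x k := by
  rw [pd, (hasFDerivAt_normZpow m hx).fderiv]
  simp [mul_assoc, EuclideanSpace.inner_single_right]

lemma diff_coord (a : Fin 3) (x : E3) : DifferentiableAt ℝ (fun y : E3 => y a) x :=
  (EuclideanSpace.proj (𝕜 := ℝ) a).differentiableAt

lemma pd_coord (a k : Fin 3) (x : E3) :
    pd k (fun y : E3 => y a) x = if k = a then 1 else 0 := by
  have h : (fun y : E3 => y a) = ⇑(EuclideanSpace.proj (𝕜 := ℝ) a) := rfl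
  rw [pd, h, ContinuousLinearMap.fderiv]
  simp [EuclideanSpace.single_apply, eq_comm]

lemma pd_mul {f g : E3 → ℝ} {x : E3} (hf : DifferentiableAt ℝ f x)
    (hg : DifferentiableAt ℝ g x) (k : Fin 3) :
    pd k (fun y => f y * g y) x = pd k f x * g x + f x * pd k g x := by
  unfold pd
  rw [fderiv_fun_mul hf hg]
  simp
  ring

lemma pd_const_mul {f : E3 → ℝ} {x : E3} (hf : DifferentiableAt ℝ f x) (c : ℝ) (k : Fin 3) :
    pd k (fun y => c * f y) x = c * pd k f x := by
  unfold pd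
  rw [fderiv_const_mul hf]
  simp

lemma pd_add {f g : E3 → ℝ} {x : E3} (hf : DifferentiableAt ℝ f x)
    (hg : DifferentiableAt ℝ g x) (k : Fin 3) :
    pd k (fun y => f y + g y) x = pd k f x + pd k g x := by
  unfold pd
  rw [fderiv_fun_add hf hg]
  simp

lemma pd_const (c : ℝ) (k : Fin 3) (x : E3) : pd k (fun _ : E3 => c) x = 0 := by
  unfold pd
  rw [fderiv_fun_const]
  simp

lemma pd_congr_open {U : Set (EuclideanSpace ℝ (Fin 3))} (hU : IsOpen U) {x : E3} (hxU : x ∈ U)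
    {f g : E3 → ℝ} (h : ∀ y ∈ U, f y = g y) (k : Fin 3) : pd k f x = pd k g x := by
  unfold pd
  rw [Filter.EventuallyEq.fderiv_eq (Filter.eventuallyEq_of_mem (hU.mem_nhds hxU) h)]

lemma pd_czpow_coord (c : ℝ) (m : ℤ) (a k : Fin 3) {x : E3} (hx : x ≠ 0) :
    pd k (fun y : E3 => c * ‖y‖ ^ m * y a) x
      = c * ((m : ℝ) * ‖x‖ ^ (m - 2) * x k) * x a + c * ‖x‖ ^ m * (if k = a then 1 else 0) := by
  have h1 : DifferentiableAt ℝ (fun y : E3 => c * ‖y‖ ^ m) x := (diff_zpow m hx).const_mul c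
  have h2 := pd_mul (f := fun y : E3 => c * ‖y‖ ^ m) (g := fun y : E3 => y a) h1
    (diff_coord a x) k
  rw [h2, pd_const_mul (diff_zpow m hx) c k, pd_zpow m k hx, pd_coord]

lemma pd_coord_mul {f : E3 → ℝ} {x : E3} (hf : DifferentiableAt ℝ f x) (a k : Fin 3) :
    pd k (fun y : E3 => y a * f y) x = (if k = a then 1 else 0) * f x + x a * pd k f x := by
  have h2 := pd_mul (f := fun y : E3 => y a) (g := f) (diff_coord a x) hf k
  rw [h2, pd_coord]

lemma sumsq (x : E3) : ∑ k, x k * x k = ‖x‖ ^ 2 := by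
  rw [EuclideanSpace.norm_eq, Real.sq_sqrt (by positivity)]
  simp [sq_abs, sq]

lemma lap_f_zero (A B C D : ℝ) (i j : Fin 3)
    (hD : D = -(C * (if i = j then (1:ℝ)/3 else 0)))
    {x : E3} (hx : x ≠ 0) :
    lap (fun y : E3 => A + (B * ‖y‖ ^ (-1:ℤ)
      + (C * (y i * (y j * ‖y‖ ^ (-5:ℤ))) + D * ‖y‖ ^ (-3:ℤ)))) x = 0 := by
  have hU : IsOpen {y : E3 | y ≠ 0} := isOpen_compl_singleton
  have hxU : x ∈ {y : E3 | y ≠ 0} := hx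
  have hg : ∀ k : Fin 3, ∀ y ∈ {y : E3 | y ≠ 0},
      pd k (fun y : E3 => A + (B * ‖y‖ ^ (-1:ℤ)
        + (C * (y i * (y j * ‖y‖ ^ (-5:ℤ))) + D * ‖y‖ ^ (-3:ℤ)))) y
      = B * (-1 * ‖y‖ ^ (-3:ℤ) * y k)
        + (C * ((if k = i then (1:ℝ) else 0) * (y j * ‖y‖ ^ (-5:ℤ))
              + y i * ((if k = j then (1:ℝ) else 0) * ‖y‖ ^ (-5:ℤ)
                     + y j * (-5 * ‖y‖ ^ (-7:ℤ) * y k)))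
          + D * (-3 * ‖y‖ ^ (-5:ℤ) * y k)) := by
    intro k y hy
    replace hy : y ≠ 0 := hy
    have d1 : DifferentiableAt ℝ (fun z : E3 => ‖z‖ ^ (-1:ℤ)) y := diff_zpow _ hy
    have d3 : DifferentiableAt ℝ (fun z : E3 => ‖z‖ ^ (-3:ℤ)) y := diff_zpow _ hy
    have d5 : DifferentiableAt ℝ (fun z : E3 => ‖z‖ ^ (-5:ℤ)) y := diff_zpow _ hy
    have dj5 : DifferentiableAt ℝ (fun z : E3 => z j * ‖z‖ ^ (-5:ℤ)) y :=
      (diff_coord j y).mul d5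
    have dij5 : DifferentiableAt ℝ (fun z : E3 => z i * (z j * ‖z‖ ^ (-5:ℤ))) y :=
      (diff_coord i y).mul dj5
    have dbig : DifferentiableAt ℝ (fun z : E3 => B * ‖z‖ ^ (-1:ℤ)
        + (C * (z i * (z j * ‖z‖ ^ (-5:ℤ))) + D * ‖z‖ ^ (-3:ℤ))) y :=
      (d1.const_mul B).add ((dij5.const_mul C).add (d3.const_mul D))
    have e0 := pd_add (f := fun _ : E3 => A) (g := fun z : E3 => B * ‖z‖ ^ (-1:ℤ)
        + (C * (z i * (z j * ‖z‖ ^ (-5:ℤ))) + D * ‖z‖ ^ (-3:ℤ)))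
      (differentiableAt_const A) dbig k
    rw [e0, pd_const]
    have e1 := pd_add (f := fun z : E3 => B * ‖z‖ ^ (-1:ℤ))
      (g := fun z : E3 => C * (z i * (z j * ‖z‖ ^ (-5:ℤ))) + D * ‖z‖ ^ (-3:ℤ))
      (d1.const_mul B) ((dij5.const_mul C).add (d3.const_mul D)) k
    rw [e1]
    have e2 := pd_add (f := fun z : E3 => C * (z i * (z j * ‖z‖ ^ (-5:ℤ))))
      (g := fun z : E3 => D * ‖z‖ ^ (-3:ℤ)) (dij5.const_mul C) (d3.const_mul D) k
    rw [e2, pd_const_mul d1 B k, pd_const_mul dij5 C k, pd_const_mul d3 D k,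
      pd_coord_mul dj5 i k, pd_coord_mul d5 j k,
      pd_zpow (-1) k hy, pd_zpow (-3) k hy, pd_zpow (-5) k hy]
    norm_num
    try ring
  have hT : ∀ k : Fin 3, pd k (pd k (fun y : E3 => A + (B * ‖y‖ ^ (-1:ℤ)
      + (C * (y i * (y j * ‖y‖ ^ (-5:ℤ))) + D * ‖y‖ ^ (-3:ℤ))))) x
      = (-B * ‖x‖ ^ (-3:ℤ) + -5*C*(x i * x j)*‖x‖ ^ (-7:ℤ) + -3*D*‖x‖ ^ (-5:ℤ))
        + (3*B*‖x‖ ^ (-5:ℤ) + 35*C*(x i * x j)*‖x‖ ^ (-9:ℤ) + 15*D*‖x‖ ^ (-7:ℤ)) * (x k * x k)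
        + (if k = i then (1:ℝ) else 0) *
            (2*C*((if k = j then (1:ℝ) else 0)*‖x‖ ^ (-5:ℤ) - 5*‖x‖ ^ (-7:ℤ)*(x j * x k)))
        + (if k = j then (1:ℝ) else 0) * (-10*C*‖x‖ ^ (-7:ℤ)*(x i * x k)) := by
    intro k
    have step := pd_congr_open hU hxU (hg k) k
    rw [step]
    -- now compute pd k (g k) x
    have d3 : DifferentiableAt ℝ (fun z : E3 => ‖z‖ ^ (-3:ℤ)) x := diff_zpow _ hx
    have d5 : DifferentiableAt ℝ (fun z : E3 => ‖z‖ ^ (-5:ℤ)) x := diff_zpow _ hx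
    have d7 : DifferentiableAt ℝ (fun z : E3 => ‖z‖ ^ (-7:ℤ)) x := diff_zpow _ hx
    have dt1 : DifferentiableAt ℝ (fun z : E3 => -1 * ‖z‖ ^ (-3:ℤ) * z k) x :=
      ((d3.const_mul (-1)).mul (diff_coord k x))
    have dj5 : DifferentiableAt ℝ (fun z : E3 => z j * ‖z‖ ^ (-5:ℤ)) x :=
      (diff_coord j x).mul d5
    have dt2c : DifferentiableAt ℝ (fun z : E3 => -5 * ‖z‖ ^ (-7:ℤ) * z k) x :=
      ((d7.const_mul (-5)).mul (diff_coord k x))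
    have dt2b : DifferentiableAt ℝ (fun z : E3 => (if k = j then (1:ℝ) else 0) * ‖z‖ ^ (-5:ℤ)
        + z j * (-5 * ‖z‖ ^ (-7:ℤ) * z k)) x :=
      (d5.const_mul _).add ((diff_coord j x).mul dt2c)
    have dt2i : DifferentiableAt ℝ (fun z : E3 => z i * ((if k = j then (1:ℝ) else 0) * ‖z‖ ^ (-5:ℤ)
        + z j * (-5 * ‖z‖ ^ (-7:ℤ) * z k))) x := (diff_coord i x).mul dt2b
    have dt2 : DifferentiableAt ℝ (fun z : E3 => (if k = i then (1:ℝ) else 0) * (z j * ‖z‖ ^ (-5:ℤ))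
        + z i * ((if k = j then (1:ℝ) else 0) * ‖z‖ ^ (-5:ℤ)
               + z j * (-5 * ‖z‖ ^ (-7:ℤ) * z k))) x :=
      (dj5.const_mul _).add dt2i
    have dt3 : DifferentiableAt ℝ (fun z : E3 => -3 * ‖z‖ ^ (-5:ℤ) * z k) x :=
      ((d5.const_mul (-3)).mul (diff_coord k x))
    have e0 := pd_add (f := fun z : E3 => B * (-1 * ‖z‖ ^ (-3:ℤ) * z k))
      (g := fun z : E3 => C * ((if k = i then (1:ℝ) else 0) * (z j * ‖z‖ ^ (-5:ℤ))
              + z i * ((if k = j then (1:ℝ) else 0) * ‖z‖ ^ (-5:ℤ)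
                     + z j * (-5 * ‖z‖ ^ (-7:ℤ) * z k)))
          + D * (-3 * ‖z‖ ^ (-5:ℤ) * z k))
      (dt1.const_mul B) ((dt2.const_mul C).add (dt3.const_mul D)) k
    rw [e0]
    have e1 := pd_add (f := fun z : E3 => C * ((if k = i then (1:ℝ) else 0) * (z j * ‖z‖ ^ (-5:ℤ))
              + z i * ((if k = j then (1:ℝ) else 0) * ‖z‖ ^ (-5:ℤ)
                     + z j * (-5 * ‖z‖ ^ (-7:ℤ) * z k))))
      (g := fun z : E3 => D * (-3 * ‖z‖ ^ (-5:ℤ) * z k))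
      (dt2.const_mul C) (dt3.const_mul D) k
    rw [e1, pd_const_mul dt1 B k, pd_const_mul dt2 C k, pd_const_mul dt3 D k]
    have e2 := pd_add (f := fun z : E3 => (if k = i then (1:ℝ) else 0) * (z j * ‖z‖ ^ (-5:ℤ)))
      (g := fun z : E3 => z i * ((if k = j then (1:ℝ) else 0) * ‖z‖ ^ (-5:ℤ)
               + z j * (-5 * ‖z‖ ^ (-7:ℤ) * z k)))
      (dj5.const_mul _) dt2i k
    rw [e2, pd_const_mul dj5 _ k, pd_coord_mul dt2b i k]
    have e3 := pd_add (f := fun z : E3 => (if k = j then (1:ℝ) else 0) * ‖z‖ ^ (-5:ℤ))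
      (g := fun z : E3 => z j * (-5 * ‖z‖ ^ (-7:ℤ) * z k))
      (d5.const_mul _) ((diff_coord j x).mul dt2c) k
    rw [e3, pd_const_mul d5 _ k, pd_coord_mul dt2c j k, pd_coord_mul d5 j k,
      pd_czpow_coord (-1) (-3) k k hx, pd_czpow_coord (-5) (-7) k k hx,
      pd_czpow_coord (-3) (-5) k k hx, pd_zpow (-5) k hx]
    simp only [if_pos rfl]
    norm_num
    split_ifs <;> ring
  unfold lap
  rw [Finset.sum_congr rfl fun k _ => hT k]
  have hrne : ‖x‖ ≠ 0 := norm_ne_zero_iff.mpr hx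
  simp only [Finset.sum_add_distrib, ite_mul, one_mul, zero_mul, Finset.sum_ite_eq',
    Finset.mem_univ, if_true, Finset.sum_const, Finset.card_univ, Fintype.card_fin,
    nsmul_eq_mul, ← Finset.mul_sum]
  rw [sumsq]
  have z : ∀ n : ℕ, ‖x‖ ^ (-(n:ℤ)) = (‖x‖ ^ n)⁻¹ := fun n => by
    rw [zpow_neg, zpow_natCast]
  rw [show ((-3:ℤ)) = -((3:ℕ):ℤ) by norm_num, show ((-5:ℤ)) = -((5:ℕ):ℤ) by norm_num,
    show ((-7:ℤ)) = -((7:ℕ):ℤ) by norm_num, show ((-9:ℤ)) = -((9:ℕ):ℤ) by norm_num] at *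
  simp only [z]
  rw [hD]
  push_cast
  split_ifs <;> field_simp <;> ring

/-- The tensor field
`Q(x) = (1 − (w/(1+w))(1/|x|)) Q* + (w/(3+w))(1/|x|³) Q_b(x)`,
with `Q* = s(n⊗n − I/3)` for a fixed unit vector `n` and
`Q_b(x) = s(x̂⊗x̂ − I/3)`, is harmonic componentwise on `ℝ³ \ {0}`. -/
theorem Q_harmonic (w s : ℝ) (hw : 0 < w) (hs : 0 < s)
    (n : EuclideanSpace ℝ (Fin 3)) (hn : ‖n‖ = 1)
    (Q : EuclideanSpace ℝ (Fin 3) → Fin 3 → Fin 3 → ℝ)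
    (hQ : ∀ x, ∀ i j, Q x i j =
      (1 - w / (1 + w) * (1 / ‖x‖)) * (s * (n i * n j - (if i = j then (1:ℝ)/3 else 0)))
      + w / (3 + w) * (1 / ‖x‖ ^ 3)
        * (s * ((x i / ‖x‖) * (x j / ‖x‖) - (if i = j then (1:ℝ)/3 else 0)))) :
    ∀ x : EuclideanSpace ℝ (Fin 3), x ≠ 0 → ∀ i j, lap (fun y => Q y i j) x = 0 := by
  intro x hx i j
  have hU : IsOpen {y : E3 | y ≠ 0} := isOpen_compl_singleton
  have key : ∀ y ∈ {y : E3 | y ≠ 0}, Q y i j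
      = (s * (n i * n j - (if i = j then (1:ℝ)/3 else 0)))
        + ((-(w / (1 + w)) * (s * (n i * n j - (if i = j then (1:ℝ)/3 else 0)))) * ‖y‖ ^ (-1:ℤ)
          + ((w / (3 + w) * s) * (y i * (y j * ‖y‖ ^ (-5:ℤ)))
            + (-(w / (3 + w) * s * (if i = j then (1:ℝ)/3 else 0))) * ‖y‖ ^ (-3:ℤ))) := by
    intro y hy
    replace hy : y ≠ 0 := hy
    have hrne : ‖y‖ ≠ 0 := norm_ne_zero_iff.mpr hy
    rw [hQ]
    have z : ∀ m : ℕ, ‖y‖ ^ (-(m:ℤ)) = (‖y‖ ^ m)⁻¹ := fun m => by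
      rw [zpow_neg, zpow_natCast]
    rw [show ((-1:ℤ)) = -((1:ℕ):ℤ) by norm_num, show ((-3:ℤ)) = -((3:ℕ):ℤ) by norm_num,
      show ((-5:ℤ)) = -((5:ℕ):ℤ) by norm_num]
    simp only [z]
    have h1w : (1 + w) ≠ 0 := by linarith
    have h3w : (3 + w) ≠ 0 := by linarith
    split_ifs <;> field_simp <;> ring
  have h2 : lap (fun y => Q y i j) x
      = lap (fun y : E3 => (s * (n i * n j - (if i = j then (1:ℝ)/3 else 0)))
        + ((-(w / (1 + w)) * (s * (n i * n j - (if i = j then (1:ℝ)/3 else 0)))) * ‖y‖ ^ (-1:ℤ)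
          + ((w / (3 + w) * s) * (y i * (y j * ‖y‖ ^ (-5:ℤ)))
            + (-(w / (3 + w) * s * (if i = j then (1:ℝ)/3 else 0))) * ‖y‖ ^ (-3:ℤ)))) x := by
    unfold lap
    refine Finset.sum_congr rfl fun k _ => ?_
    exact pd_congr_open hU hx (fun y hy => pd_congr_open hU hy key k) k
  rw [h2]
  exact lap_f_zero _ _ _ _ i j (by ring) hx
end
end

section
/- Suppose F : S² → ℝ³ is continuous with ∫_{S²} F dσ = 0, and define f(y) = F(ŷ)/|y|³ for |y| ≥ 1. Then the integral I(x) = ∫_{|y|≥1} |x−y|⁻¹ f(y) dy satisfies the bound |I(x)| ≤ C/|x| for all |x| ≥ 2, for some constant C depending only on sup|F|. -/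
open MeasureTheory Metric Set

noncomputable section

/-- The surface measure on the unit sphere `S² ⊂ ℝ³`. -/
def sphereMeasure : Measure (sphere (0 : EuclideanSpace ℝ (Fin 3)) 1) :=
  (volume : Measure (EuclideanSpace ℝ (Fin 3))).toSphere

abbrev E3' := EuclideanSpace ℝ (Fin 3)

set_option maxHeartbeats 2000000

lemma radial_integral' (φ : ℝ → ℝ) :
    ∫ y : E3', φ ‖y‖ = (3:ℝ) * (volume (ball (0:E3') 1)).toReal * ∫ r in Ioi (0:ℝ), r ^ 2 * φ r := by
  have h := MeasureTheory.integral_fun_norm_addHaar (volume : Measure E3') φ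
  simp only [finrank_euclideanSpace_fin, measureReal_def] at h
  rw [h]
  simp only [nsmul_eq_mul, smul_eq_mul, Nat.cast_ofNat]
  norm_num [mul_assoc]

lemma polar_smul' (φ : ℝ → ℝ) (F : E3' → E3') :
    ∫ y : E3', φ ‖y‖ • F (‖y‖⁻¹ • y) =
      (∫ r : (Ioi (0:ℝ)), φ r ∂(Measure.volumeIoiPow 2)) •
        ∫ ω : sphere (0:E3') 1, F ω ∂((volume : Measure E3').toSphere) := by
  have h0 : ∫ y : E3', φ ‖y‖ • F (‖y‖⁻¹ • y)
      = ∫ z : ({0}ᶜ : Set E3'), φ ‖(z:E3')‖ • F (‖(z:E3')‖⁻¹ • (z:E3')) ∂((volume : Measure E3').comap (↑)) := by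
    rw [integral_subtype_comap (measurableSet_singleton (0:E3')).compl
      (fun y => φ ‖y‖ • F (‖y‖⁻¹ • y)), MeasureTheory.restrict_compl_singleton]
  rw [h0]
  have h1 := (volume : Measure E3').measurePreserving_homeomorphUnitSphereProd.integral_comp
    (Homeomorph.measurableEmbedding _) (fun p : sphere (0:E3') 1 × Ioi (0:ℝ) => φ p.2 • F p.1)
  simp only [finrank_euclideanSpace_fin] at h1
  norm_num at h1
  rw [h1, ← integral_prod_swap]
  exact integral_prod_smul (fun r : (Ioi (0:ℝ)) => φ r) (fun ω : sphere (0:E3') 1 => F ω)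

lemma radial_integrable' {φ : ℝ → ℝ} (hφ : Measurable φ)
    (h : IntegrableOn (fun r => r ^ 2 * φ r) (Ioi (0:ℝ))) :
    Integrable (fun y : E3' => φ ‖y‖) := by
  have hs := (measurableSet_singleton (0:E3')).compl
  rw [← MeasureTheory.restrict_compl_singleton (μ := (volume : Measure E3')) 0,
    ← map_comap_subtype_coe hs, (MeasurableEmbedding.subtype_coe hs).integrable_map_iff]
  have key : ((fun y : E3' => φ ‖y‖) ∘ (Subtype.val : ({0}ᶜ : Set E3') → E3'))
      = (fun p : sphere (0:E3') 1 × Ioi (0:ℝ) => φ p.2) ∘ (homeomorphUnitSphereProd E3') := by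
    funext z; simp
  rw [key, (volume : Measure E3').measurePreserving_homeomorphUnitSphereProd.integrable_comp_emb
    (Homeomorph.measurableEmbedding _)]
  simp only [finrank_euclideanSpace_fin]
  norm_num
  have hν : Integrable (fun r : Ioi (0:ℝ) => φ r) (Measure.volumeIoiPow 2) := by
    rw [Measure.volumeIoiPow, integrable_withDensity_iff]
    · have heq : (fun r : Ioi (0:ℝ) => φ ↑r * (ENNReal.ofReal ((r:ℝ) ^ 2)).toReal)
          = (fun t : ℝ => t ^ 2 * φ t) ∘ (Subtype.val : Ioi (0:ℝ) → ℝ) := by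
        funext r; simp [ENNReal.toReal_ofReal (sq_nonneg (r:ℝ))]; ring
      rw [heq, ← (MeasurableEmbedding.subtype_coe measurableSet_Ioi).integrable_map_iff,
        map_comap_subtype_coe measurableSet_Ioi]
      exact h
    · exact ((measurable_subtype_coe.pow_const 2).ennreal_ofReal)
    · exact Filter.Eventually.of_forall fun r => ENNReal.ofReal_lt_top
  rw [integrable_prod_iff]
  · refine ⟨Filter.Eventually.of_forall fun _ => hν, ?_⟩
    simp only
    exact integrable_const _
  · exact ((hφ.comp measurable_subtype_coe).comp measurable_snd).aestronglyMeasurable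

lemma integral_indicator_const_Ioi {s : Set ℝ} (hs : MeasurableSet s) (c : ℝ) :
    ∫ r in Ioi (0:ℝ), s.indicator (fun _ => c) r = c * (volume (s ∩ Ioi 0)).toReal := by
  rw [integral_indicator hs, setIntegral_const, measureReal_restrict_apply hs, measureReal_def, smul_eq_mul, mul_comm]

lemma indicator_const_integrableOn {s : Set ℝ} (hs : MeasurableSet s) (hfin : volume s ≠ ⊤)
    (c : ℝ) : IntegrableOn (s.indicator (fun _ => c)) (Ioi (0:ℝ)) := by
  rw [IntegrableOn, integrable_indicator_iff hs]
  refine (integrableOn_const_iff).mpr (Or.inr ?_)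
  rw [Measure.restrict_apply hs]
  exact lt_of_le_of_lt (measure_mono inter_subset_left) hfin.lt_top

lemma radial_piece {φ : ℝ → ℝ} {s : Set ℝ} (hs : MeasurableSet s) (hφ : Measurable φ)
    (hfin : volume s ≠ ⊤) {c : ℝ}
    (h0 : ∀ r ∈ Ioi (0:ℝ), 0 ≤ r ^ 2 * φ r)
    (hbound : ∀ r ∈ Ioi (0:ℝ), r ^ 2 * φ r ≤ s.indicator (fun _ => c) r) :
    IntegrableOn (fun r => r ^ 2 * φ r) (Ioi (0:ℝ)) ∧
      ∫ r in Ioi (0:ℝ), r ^ 2 * φ r ≤ c * (volume (s ∩ Ioi 0)).toReal := by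
  have hind := indicator_const_integrableOn hs hfin c
  have hint : IntegrableOn (fun r => r ^ 2 * φ r) (Ioi (0:ℝ)) := by
    refine Integrable.mono hind ((measurable_id.pow_const 2).mul hφ).aestronglyMeasurable ?_
    filter_upwards [ae_restrict_mem measurableSet_Ioi] with r hr
    rw [Real.norm_eq_abs, Real.norm_eq_abs, abs_of_nonneg (h0 r hr)]
    exact le_trans (hbound r hr) (le_abs_self _)
  exact ⟨hint, le_trans (setIntegral_mono_on hint hind measurableSet_Ioi hbound)
    (le_of_eq (integral_indicator_const_Ioi hs c))⟩

lemma vol_Icc_inter {a b : ℝ} (hab : a ≤ b) : (volume (Icc a b ∩ Ioi 0)).toReal ≤ b - a := by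
  have h2 : volume (Icc a b) = ENNReal.ofReal (b - a) := Real.volume_Icc
  calc (volume (Icc a b ∩ Ioi 0)).toReal
      ≤ (volume (Icc a b)).toReal := by
        refine ENNReal.toReal_mono (by rw [h2]; exact ENNReal.ofReal_ne_top)
          (measure_mono inter_subset_left)
    _ = b - a := by rw [h2, ENNReal.toReal_ofReal (by linarith)]

/-- If `F` is continuous with mean zero on the unit sphere and `f(y) = F(ŷ)/|y|³`
for `|y| ≥ 1`, then `I(x) = ∫_{|y|≥1} |x−y|⁻¹ f(y) dy` satisfies `|I(x)| ≤ C/|x|`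
for all `|x| ≥ 2`, for some constant `C`. -/
theorem newtonian_potential_decay_of_mean_zero
    (F : EuclideanSpace ℝ (Fin 3) → EuclideanSpace ℝ (Fin 3)) (hF : Continuous F)
    (hmean : ∫ ω : sphere (0 : EuclideanSpace ℝ (Fin 3)) 1,
        F (ω : EuclideanSpace ℝ (Fin 3)) ∂sphereMeasure = 0) :
    ∃ C : ℝ, ∀ x : EuclideanSpace ℝ (Fin 3), 2 ≤ ‖x‖ →
      ‖∫ y in {y : EuclideanSpace ℝ (Fin 3) | 1 ≤ ‖y‖},
          (‖x - y‖ * ‖y‖ ^ 3)⁻¹ • F (‖y‖⁻¹ • y)‖ ≤ C / ‖x‖ := by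
  classical
  obtain ⟨M0, hM0⟩ := (isCompact_sphere (0:E3') 1).exists_bound_of_continuousOn hF.continuousOn
  set V : ℝ := (volume (ball (0:E3') 1)).toReal with hVdef
  have hV : 0 ≤ V := ENNReal.toReal_nonneg
  set M : ℝ := max M0 0 with hMdef
  have hM : 0 ≤ M := le_max_right _ _
  have hMs : ∀ y : E3', y ≠ 0 → ‖F (‖y‖⁻¹ • y)‖ ≤ M := by
    intro y hy
    have hn : ‖y‖ ≠ 0 := norm_ne_zero_iff.mpr hy
    have hmem : (‖y‖⁻¹ • y) ∈ sphere (0:E3') 1 := by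
      rw [mem_sphere_zero_iff_norm, norm_smul, norm_inv, norm_norm, inv_mul_cancel₀ hn]
    exact le_trans (hM0 _ hmem) (le_max_left _ _)
  refine ⟨50 * M * V, ?_⟩
  intro x hx
  set R : ℝ := ‖x‖ with hRdef
  have hR2 : (2:ℝ) ≤ R := hx
  have hR0 : (0:ℝ) < R := by linarith

  -- the two regions
  set A : Set E3' := {y : E3' | ‖y‖ ∈ Icc 1 (R/2)} with hAdef
  set B : Set E3' := {y : E3' | R/2 < ‖y‖} with hBdef
  have hAm : MeasurableSet A := measurable_norm measurableSet_Icc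
  have hBm : MeasurableSet B := measurable_norm measurableSet_Ioi
  have hR21 : (1:ℝ) ≤ R/2 := by linarith
  have hDsplit : {y : E3' | 1 ≤ ‖y‖} = A ∪ B := by
    ext y
    simp only [hAdef, hBdef, mem_setOf_eq, mem_union, mem_Icc]
    constructor
    · intro h
      rcases le_or_gt ‖y‖ (R/2) with h' | h'
      · exact Or.inl ⟨h, h'⟩
      · exact Or.inr h'
    · rintro (⟨h1, _⟩ | h)
      · exact h1
      · linarith
  have hdisj : Disjoint A B := by
    rw [Set.disjoint_left]
    intro y hyA hyB
    rw [hAdef, mem_setOf_eq, mem_Icc] at hyA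
    rw [hBdef, mem_setOf_eq] at hyB
    linarith [hyA.2]
  -- functions
  set G : E3' → E3' := fun y => (‖x - y‖ * ‖y‖ ^ 3)⁻¹ • F (‖y‖⁻¹ • y) with hGdef
  set G1 : E3' → E3' := fun y => ((‖x - y‖⁻¹ - R⁻¹) * (‖y‖ ^ 3)⁻¹) • F (‖y‖⁻¹ • y) with hG1def
  set G2 : E3' → E3' := fun y => (R⁻¹ * (‖y‖ ^ 3)⁻¹) • F (‖y‖⁻¹ • y) with hG2def
  have hdirm : Measurable fun y : E3' => F (‖y‖⁻¹ • y) :=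
    hF.measurable.comp (measurable_norm.inv.smul measurable_id)
  have hGm : Measurable G :=
    (((measurable_const.sub measurable_id).norm.mul (measurable_norm.pow_const 3)).inv).smul hdirm
  have hG1m : Measurable G1 :=
    ((((measurable_const.sub measurable_id).norm.inv.sub measurable_const).mul
      ((measurable_norm.pow_const 3).inv)).smul hdirm)
  have hG2m : Measurable G2 :=
    ((measurable_const.mul ((measurable_norm.pow_const 3).inv)).smul hdirm)
  have hGsum : ∀ y : E3', G y = G1 y + G2 y := by
    intro y
    simp only [hGdef, hG1def, hG2def]
    rw [mul_inv, ← add_smul]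
    congr 1
    ring
  -- radial profiles
  set φA : ℝ → ℝ := (Icc 1 (R/2)).indicator (fun r => (r^3)⁻¹) with hφAdef
  set φA2 : ℝ → ℝ := (Icc 1 (R/2)).indicator (fun r => (r^2)⁻¹) with hφA2def
  set ψ1 : ℝ → ℝ := (Iio (R/4)).indicator (fun r => r⁻¹) with hψ1def
  set φ2 : ℝ → ℝ := (Icc (R/2) (2*R)).indicator (fun r => (4/R) * (r^3)⁻¹) with hφ2def
  set φ3 : ℝ → ℝ := (Ioi (2*R)).indicator (fun r => 2 * (r^4)⁻¹) with hφ3def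
  have hφAm : Measurable φA := ((measurable_id.pow_const 3).inv).indicator measurableSet_Icc
  have hφA2m : Measurable φA2 := ((measurable_id.pow_const 2).inv).indicator measurableSet_Icc
  have hψ1m : Measurable ψ1 := (measurable_id.inv).indicator measurableSet_Iio
  have hφ2m : Measurable φ2 :=
    (measurable_const.mul ((measurable_id.pow_const 3).inv)).indicator measurableSet_Icc
  have hφ3m : Measurable φ3 :=
    (measurable_const.mul ((measurable_id.pow_const 4).inv)).indicator measurableSet_Ioi
  -- nonnegativity of the profiles
  have hφA2nn : ∀ r : ℝ, 0 ≤ φA2 r := fun r =>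
    indicator_nonneg (fun t _ => by positivity) r
  have hψ1nn : ∀ r : ℝ, 0 ≤ r → 0 ≤ ψ1 r := by
    intro r hr
    rw [hψ1def]
    by_cases hmem : r ∈ Iio (R/4)
    · rw [indicator_of_mem hmem]; exact inv_nonneg.mpr hr
    · rw [indicator_of_notMem hmem]
  have hφ2nn : ∀ r : ℝ, 0 ≤ φ2 r := by
    intro r
    rw [hφ2def]
    refine indicator_nonneg (fun t ht => ?_) r
    have ht0 : (0:ℝ) ≤ t := by have := ht.1; linarith
    exact mul_nonneg (div_nonneg (by norm_num) hR0.le) (inv_nonneg.mpr (pow_nonneg ht0 3))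
  have hφ3nn : ∀ r : ℝ, 0 ≤ φ3 r := by
    intro r
    rw [hφ3def]
    refine indicator_nonneg (fun t ht => ?_) r
    have ht0 : (0:ℝ) ≤ t := by have : 2*R < t := ht; linarith
    exact mul_nonneg (by norm_num) (inv_nonneg.mpr (pow_nonneg ht0 4))
  -- radial integrability and integral bounds
  have hφA2piece := radial_piece (measurableSet_Icc (a := (1:ℝ)) (b := R/2)) hφA2m
    (by rw [Real.volume_Icc]; exact ENNReal.ofReal_ne_top) (c := (1:ℝ))
    (fun r hr => mul_nonneg (by positivity) (hφA2nn r))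
    (by
      intro r hr
      rw [hφA2def]
      by_cases hmem : r ∈ Icc 1 (R/2)
      · rw [indicator_of_mem hmem, indicator_of_mem hmem]
        have hrne : r ≠ 0 := ne_of_gt hr
        rw [mul_inv_cancel₀ (pow_ne_zero 2 hrne)]
      · rw [indicator_of_notMem hmem, indicator_of_notMem hmem, mul_zero])
  have hψ1piece := radial_piece (measurableSet_Icc (a := (0:ℝ)) (b := R/4)) hψ1m
    (by rw [Real.volume_Icc]; exact ENNReal.ofReal_ne_top) (c := R/4)
    (fun r hr => mul_nonneg (by positivity) (hψ1nn r (le_of_lt hr)))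
    (by
      intro r hr
      have hr0 : (0:ℝ) < r := hr
      rw [hψ1def]
      by_cases hmem : r ∈ Iio (R/4)
      · rw [indicator_of_mem hmem,
          indicator_of_mem (show r ∈ Icc 0 (R/4) from ⟨hr0.le, le_of_lt hmem⟩)]
        rw [pow_two, mul_assoc, mul_inv_cancel₀ (ne_of_gt hr0), mul_one]
        exact le_of_lt hmem
      · rw [indicator_of_notMem hmem, mul_zero]
        exact indicator_nonneg (fun t _ => by linarith) r)
  have hφ2piece := radial_piece (measurableSet_Icc (a := R/2) (b := 2*R)) hφ2m
    (by rw [Real.volume_Icc]; exact ENNReal.ofReal_ne_top) (c := 8/R^2)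
    (fun r hr => mul_nonneg (by positivity) (hφ2nn r))
    (by
      intro r hr
      have hr0 : (0:ℝ) < r := hr
      rw [hφ2def]
      by_cases hmem : r ∈ Icc (R/2) (2*R)
      · rw [indicator_of_mem hmem, indicator_of_mem hmem]
        have h1 : r^2*((4/R)*(r^3)⁻¹) = (4/R)*r⁻¹ := by
          field_simp
        have h2 : r⁻¹ ≤ 2/R := by
          have h3 := inv_anti₀ (show (0:ℝ) < R/2 by linarith) hmem.1
          rwa [inv_div] at h3
        rw [h1]
        calc (4/R)*r⁻¹ ≤ (4/R)*(2/R) :=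
              mul_le_mul_of_nonneg_left h2 (div_nonneg (by norm_num) hR0.le)
          _ = 8/R^2 := by
              field_simp
              ring
      · rw [indicator_of_notMem hmem, indicator_of_notMem hmem, mul_zero])
  -- the φ3 piece (improper integral)
  have h2R0 : (0:ℝ) < 2*R := by linarith
  have hφ3cong : ∀ r ∈ Ioi (0:ℝ), r^2*φ3 r = (Ioi (2*R)).indicator (fun r => 2*(r^2)⁻¹) r := by
    intro r hr
    have hr0 : (0:ℝ) < r := hr
    rw [hφ3def]
    by_cases hmem : r ∈ Ioi (2*R)
    · rw [indicator_of_mem hmem, indicator_of_mem hmem]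
      field_simp
    · rw [indicator_of_notMem hmem, indicator_of_notMem hmem, mul_zero]
  have hIoisub : Ioi (2*R) ⊆ Ioi (0:ℝ) := fun r hr => lt_trans h2R0 hr
  have hrpowcong : ∀ r ∈ Ioi (2*R), (fun t : ℝ => 2 * t ^ (-2:ℝ)) r = (fun t : ℝ => 2*(t^2)⁻¹) r := by
    intro r hr
    have hr0 : (0:ℝ) < r := lt_trans h2R0 hr
    simp only
    rw [Real.rpow_neg hr0.le, show ((2:ℝ)) = ((2:ℕ):ℝ) by norm_num, Real.rpow_natCast]
  have hrpow_int : IntegrableOn (fun r : ℝ => 2*(r^2)⁻¹) (Ioi (2*R)) := by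
    refine IntegrableOn.congr_fun ?_ hrpowcong measurableSet_Ioi
    exact (integrableOn_Ioi_rpow_of_lt (by norm_num : (-2:ℝ) < -1) h2R0).const_mul 2
  have hφ3intOn : IntegrableOn (fun r => r^2*φ3 r) (Ioi (0:ℝ)) := by
    refine IntegrableOn.congr_fun ?_ (fun r hr => (hφ3cong r hr).symm) measurableSet_Ioi
    rw [IntegrableOn, integrable_indicator_iff measurableSet_Ioi, IntegrableOn,
      Measure.restrict_restrict measurableSet_Ioi, inter_eq_left.mpr hIoisub]
    exact hrpow_int
  have hφ3val : ∫ r in Ioi (0:ℝ), r^2*φ3 r = 1/R := by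
    rw [setIntegral_congr_fun measurableSet_Ioi hφ3cong, integral_indicator measurableSet_Ioi,
      Measure.restrict_restrict measurableSet_Ioi, inter_eq_left.mpr hIoisub,
      ← setIntegral_congr_fun measurableSet_Ioi hrpowcong, integral_const_mul,
      integral_Ioi_rpow_of_lt (by norm_num : (-2:ℝ) < -1) h2R0]
    rw [show (-2:ℝ) + 1 = -1 by norm_num, Real.rpow_neg_one]
    field_simp
  -- integrable majorants on E3'
  have hψ1E : Integrable (fun y : E3' => ψ1 ‖x - y‖) :=
    (radial_integrable' hψ1m hψ1piece.1).comp_sub_left x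
  have hφ2E : Integrable (fun y : E3' => φ2 ‖y‖) := radial_integrable' hφ2m hφ2piece.1
  have hφ3E : Integrable (fun y : E3' => φ3 ‖y‖) := radial_integrable' hφ3m hφ3intOn
  have hφA2E : Integrable (fun y : E3' => φA2 ‖y‖) := radial_integrable' hφA2m hφA2piece.1
  -- facts on region A
  have hAfacts : ∀ y ∈ A, 1 ≤ ‖y‖ ∧ ‖y‖ ≤ R/2 ∧ R/2 ≤ ‖x - y‖ := by
    intro y hy
    rw [hAdef, mem_setOf_eq, mem_Icc] at hy
    refine ⟨hy.1, hy.2, ?_⟩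
    have h := norm_sub_norm_le x y
    rw [← hRdef] at h
    linarith [hy.2]
  have hG1bd : ∀ y ∈ A, ‖G1 y‖ ≤ (2*M/R^2) * φA2 ‖y‖ := by
    intro y hy
    have hyIcc : ‖y‖ ∈ Icc 1 (R/2) := by rw [hAdef, mem_setOf_eq] at hy; exact hy
    obtain ⟨hb1, hb2, ha⟩ := hAfacts y hy
    have hb0 : (0:ℝ) < ‖y‖ := by linarith
    have ha0 : (0:ℝ) < ‖x - y‖ := by linarith
    have hy0 : y ≠ 0 := norm_pos_iff.mp hb0
    have hdiff : |R - ‖x - y‖| ≤ ‖y‖ := by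
      have h := abs_norm_sub_norm_le x (x - y)
      rw [sub_sub_cancel] at h
      rw [hRdef]
      exact h
    have hkey : ‖x - y‖⁻¹ - R⁻¹ = (R - ‖x - y‖) / (‖x - y‖ * R) := by
      field_simp
    have habs : |‖x - y‖⁻¹ - R⁻¹| ≤ 2*‖y‖/R^2 := by
      rw [hkey, abs_div, abs_of_pos (mul_pos ha0 hR0)]
      calc |R - ‖x - y‖| / (‖x - y‖ * R) ≤ ‖y‖ / ((R/2) * R) :=
            div_le_div₀ (norm_nonneg y) hdiff (mul_pos (by linarith) hR0)
              (mul_le_mul_of_nonneg_right ha hR0.le)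
        _ = 2*‖y‖/R^2 := by
            rw [div_eq_div_iff (by positivity) (by positivity)]
            ring
    have hFb : ‖F (‖y‖⁻¹ • y)‖ ≤ M := hMs y hy0
    have hnormG1 : ‖G1 y‖ = |(‖x - y‖⁻¹ - R⁻¹) * (‖y‖^3)⁻¹| * ‖F (‖y‖⁻¹ • y)‖ := by
      simp only [hG1def]
      rw [norm_smul, Real.norm_eq_abs]
    rw [hnormG1, abs_mul, abs_of_nonneg (inv_nonneg.mpr (pow_nonneg hb0.le 3))]
    calc |‖x - y‖⁻¹ - R⁻¹| * (‖y‖^3)⁻¹ * ‖F (‖y‖⁻¹ • y)‖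
        ≤ (2*‖y‖/R^2) * (‖y‖^3)⁻¹ * M := by
          have h1 : |‖x - y‖⁻¹ - R⁻¹| * (‖y‖^3)⁻¹ ≤ (2*‖y‖/R^2) * (‖y‖^3)⁻¹ :=
            mul_le_mul_of_nonneg_right habs (by positivity)
          exact mul_le_mul h1 hFb (norm_nonneg _) (by positivity)
      _ = (2*M/R^2) * (‖y‖^2)⁻¹ := by
          field_simp
      _ = (2*M/R^2) * φA2 ‖y‖ := by rw [hφA2def, indicator_of_mem hyIcc]
  -- mean-zero cancellation on A
  have hzero : ∫ y in A, (‖y‖ ^ 3)⁻¹ • F (‖y‖⁻¹ • y) = 0 := by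
    rw [← integral_indicator hAm]
    have hrepr : A.indicator (fun y : E3' => (‖y‖ ^ 3)⁻¹ • F (‖y‖⁻¹ • y))
        = fun y : E3' => φA ‖y‖ • F (‖y‖⁻¹ • y) := by
      funext y
      by_cases hy : ‖y‖ ∈ Icc 1 (R/2)
      · have hyA : y ∈ A := by rw [hAdef, mem_setOf_eq]; exact hy
        rw [indicator_of_mem hyA, hφAdef, indicator_of_mem hy]
      · have hyA : y ∉ A := by rw [hAdef, mem_setOf_eq]; exact hy
        rw [indicator_of_notMem hyA, hφAdef, indicator_of_notMem hy, zero_smul]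
    rw [hrepr, polar_smul' φA F]
    have hSm : ((volume : Measure E3').toSphere) = sphereMeasure := rfl
    rw [hSm, hmean, smul_zero]
  -- integrability on A
  have hAfin : volume A ≠ ⊤ := by
    refine (lt_of_le_of_lt (measure_mono ?_) (measure_closedBall_lt_top (x := (0:E3')) (r := R/2))).ne
    intro y hy
    rw [mem_closedBall_zero_iff]
    exact (hAfacts y hy).2.1
  have hbndAE : Integrable (fun y : E3' => (2*M/R^2) * φA2 ‖y‖) := hφA2E.const_mul _
  have hG1A : IntegrableOn G1 A := by
    refine Integrable.mono (hbndAE.restrict (s := A)) hG1m.aestronglyMeasurable ?_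
    filter_upwards [ae_restrict_mem hAm] with y hy
    rw [Real.norm_eq_abs]
    exact le_trans (hG1bd y hy) (le_abs_self _)
  have hG2A : IntegrableOn G2 A := by
    refine Measure.integrableOn_of_bounded hAfin hG2m.aestronglyMeasurable (M := M) ?_
    filter_upwards [ae_restrict_mem hAm] with y hy
    obtain ⟨hb1, hb2, ha⟩ := hAfacts y hy
    have hb0 : (0:ℝ) < ‖y‖ := by linarith
    have hy0 : y ≠ 0 := norm_pos_iff.mp hb0
    have hnormG2 : ‖G2 y‖ = |R⁻¹ * (‖y‖^3)⁻¹| * ‖F (‖y‖⁻¹ • y)‖ := by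
      simp only [hG2def]
      rw [norm_smul, Real.norm_eq_abs]
    rw [hnormG2]
    have h1 : |R⁻¹ * (‖y‖^3)⁻¹| ≤ 1 := by
      rw [abs_of_nonneg (by positivity)]
      have h2 : R⁻¹ ≤ 1 := by
        rw [inv_le_one₀ hR0]; linarith
      have h3 : (‖y‖^3)⁻¹ ≤ 1 := by
        rw [inv_le_one₀ (by positivity)]
        exact one_le_pow₀ hb1
      calc R⁻¹ * (‖y‖^3)⁻¹ ≤ 1 * 1 :=
            mul_le_mul h2 h3 (by positivity) (by norm_num)
        _ = 1 := by norm_num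
    calc |R⁻¹ * (‖y‖^3)⁻¹| * ‖F (‖y‖⁻¹ • y)‖ ≤ 1 * M :=
          mul_le_mul h1 (hMs y hy0) (norm_nonneg _) (by norm_num)
      _ = M := one_mul M
  have hGA : IntegrableOn G A := by
    rw [show G = fun y => G1 y + G2 y from funext hGsum]
    exact hG1A.add hG2A
  -- value of the A integral
  have hAint : ∫ y in A, G y = ∫ y in A, G1 y := by
    rw [show G = fun y => G1 y + G2 y from funext hGsum, integral_add hG1A hG2A]
    have hz2 : ∫ y in A, G2 y = 0 := by
      have hG2r : G2 = fun y : E3' => R⁻¹ • ((‖y‖ ^ 3)⁻¹ • F (‖y‖⁻¹ • y)) := by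
        funext y
        rw [hG2def, smul_smul]
      rw [hG2r, integral_smul, hzero, smul_zero]
    rw [hz2, add_zero]
  have hArad : ∫ r in Ioi (0:ℝ), r^2 * φA2 r ≤ R/2 := by
    refine le_trans hφA2piece.2 ?_
    have hle := vol_Icc_inter (show (1:ℝ) ≤ R/2 from hR21)
    calc 1 * (volume (Icc 1 (R/2) ∩ Ioi 0)).toReal
        = (volume (Icc 1 (R/2) ∩ Ioi 0)).toReal := one_mul _
      _ ≤ R/2 - 1 := hle
      _ ≤ R/2 := by linarith
  have hAbound : ‖∫ y in A, G y‖ ≤ 3*V*M/R := by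
    rw [hAint]
    calc ‖∫ y in A, G1 y‖ ≤ ∫ y in A, ‖G1 y‖ := norm_integral_le_integral_norm _
      _ ≤ ∫ y in A, (2*M/R^2) * φA2 ‖y‖ :=
          setIntegral_mono_on hG1A.norm hbndAE.integrableOn hAm hG1bd
      _ ≤ ∫ y : E3', (2*M/R^2) * φA2 ‖y‖ :=
          setIntegral_le_integral hbndAE (Filter.Eventually.of_forall fun y =>
            mul_nonneg (by positivity) (hφA2nn ‖y‖))
      _ = (2*M/R^2) * ∫ y : E3', φA2 ‖y‖ := integral_const_mul _ _
      _ = (2*M/R^2) * (3 * V * ∫ r in Ioi (0:ℝ), r^2*φA2 r) := by rw [hVdef, radial_integral' φA2]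
      _ ≤ (2*M/R^2) * (3 * V * (R/2)) := by
          refine mul_le_mul_of_nonneg_left ?_ (by positivity)
          exact mul_le_mul_of_nonneg_left hArad (by positivity)
      _ = 3*V*M/R := by
          field_simp
  -- pointwise bound on B
  have hGBbd : ∀ y ∈ B, ‖G y‖ ≤ M * ((8/R^3) * ψ1 ‖x - y‖ + φ2 ‖y‖ + φ3 ‖y‖) := by
    intro y hy
    rw [hBdef, mem_setOf_eq] at hy
    have hb0 : (0:ℝ) < ‖y‖ := by linarith
    have hy0 : y ≠ 0 := norm_pos_iff.mp hb0
    have hFb : ‖F (‖y‖⁻¹ • y)‖ ≤ M := hMs y hy0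
    have hGnorm : ‖G y‖ = (‖x - y‖ * ‖y‖^3)⁻¹ * ‖F (‖y‖⁻¹ • y)‖ := by
      simp only [hGdef]
      rw [norm_smul, Real.norm_eq_abs, abs_of_nonneg (by positivity)]
    have hsum : (‖x - y‖ * ‖y‖^3)⁻¹ ≤ (8/R^3) * ψ1 ‖x - y‖ + φ2 ‖y‖ + φ3 ‖y‖ := by
      rw [mul_inv]
      have hψnn : 0 ≤ (8/R^3) * ψ1 ‖x - y‖ :=
        mul_nonneg (by positivity) (hψ1nn _ (norm_nonneg _))
      by_cases hcase1 : ‖x - y‖ < R/4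
      · have hψ : ψ1 ‖x - y‖ = ‖x - y‖⁻¹ := by
          rw [hψ1def, indicator_of_mem (show ‖x - y‖ ∈ Iio (R/4) from hcase1)]
        have hbb : (‖y‖^3)⁻¹ ≤ 8/R^3 := by
          have h1 : R^3/8 ≤ ‖y‖^3 := by
            have hple := pow_le_pow_left₀ (show (0:ℝ) ≤ R/2 by linarith) hy.le 3
            calc R^3/8 = (R/2)^3 := by ring
              _ ≤ ‖y‖^3 := hple
          have h2 := inv_anti₀ (by positivity) h1
          rwa [inv_div] at h2
        have h3 : ‖x - y‖⁻¹ * (‖y‖^3)⁻¹ ≤ ‖x - y‖⁻¹ * (8/R^3) :=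
          mul_le_mul_of_nonneg_left hbb (inv_nonneg.mpr (norm_nonneg _))
        rw [hψ]
        have := hφ2nn ‖y‖
        have := hφ3nn ‖y‖
        nlinarith [h3]
      · push_neg at hcase1
        have ha0 : (0:ℝ) < ‖x - y‖ := by linarith
        by_cases hcase2 : ‖y‖ ≤ 2*R
        · have hφ2v : φ2 ‖y‖ = (4/R) * (‖y‖^3)⁻¹ := by
            rw [hφ2def, indicator_of_mem (show ‖y‖ ∈ Icc (R/2) (2*R) from ⟨hy.le, hcase2⟩)]
          have hainv : ‖x - y‖⁻¹ ≤ 4/R := by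
            have h2 := inv_anti₀ (show (0:ℝ) < R/4 by linarith) hcase1
            rwa [inv_div] at h2
          have h3 : ‖x - y‖⁻¹ * (‖y‖^3)⁻¹ ≤ (4/R) * (‖y‖^3)⁻¹ :=
            mul_le_mul_of_nonneg_right hainv (by positivity)
          have := hφ3nn ‖y‖
          rw [hφ2v]
          linarith
        · push_neg at hcase2
          have hφ3v : φ3 ‖y‖ = 2 * (‖y‖^4)⁻¹ := by
            rw [hφ3def, indicator_of_mem (show ‖y‖ ∈ Ioi (2*R) from hcase2)]
          have hab : ‖y‖/2 < ‖x - y‖ := by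
            have h := norm_sub_norm_le y x
            rw [← norm_sub_rev x y] at h
            rw [← hRdef] at h
            linarith
          have hainv : ‖x - y‖⁻¹ ≤ 2/‖y‖ := by
            have h2 := inv_anti₀ (by positivity : (0:ℝ) < ‖y‖/2) hab.le
            rwa [inv_div] at h2
          have h3 : ‖x - y‖⁻¹ * (‖y‖^3)⁻¹ ≤ (2/‖y‖) * (‖y‖^3)⁻¹ :=
            mul_le_mul_of_nonneg_right hainv (by positivity)
          have heq : (2/‖y‖) * (‖y‖^3)⁻¹ = 2 * (‖y‖^4)⁻¹ := by
            field_simp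
          have := hφ2nn ‖y‖
          rw [hφ3v]
          linarith [heq ▸ h3]
    rw [hGnorm]
    calc (‖x - y‖ * ‖y‖^3)⁻¹ * ‖F (‖y‖⁻¹ • y)‖ ≤ (‖x - y‖ * ‖y‖^3)⁻¹ * M :=
          mul_le_mul_of_nonneg_left hFb (by positivity)
      _ ≤ ((8/R^3) * ψ1 ‖x - y‖ + φ2 ‖y‖ + φ3 ‖y‖) * M :=
          mul_le_mul_of_nonneg_right hsum hM
      _ = M * ((8/R^3) * ψ1 ‖x - y‖ + φ2 ‖y‖ + φ3 ‖y‖) := mul_comm _ _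
  -- integrability on B
  have hΦint : Integrable (fun y : E3' => M * ((8/R^3) * ψ1 ‖x - y‖ + φ2 ‖y‖ + φ3 ‖y‖)) :=
    (((hψ1E.const_mul (8/R^3)).add hφ2E).add hφ3E).const_mul M
  have hΦnn : ∀ y : E3', 0 ≤ M * ((8/R^3) * ψ1 ‖x - y‖ + φ2 ‖y‖ + φ3 ‖y‖) := by
    intro y
    refine mul_nonneg hM ?_
    have h1 : 0 ≤ (8/R^3) * ψ1 ‖x - y‖ := mul_nonneg (by positivity) (hψ1nn _ (norm_nonneg _))
    linarith [hφ2nn ‖y‖, hφ3nn ‖y‖]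
  have hGB : IntegrableOn G B := by
    refine Integrable.mono (hΦint.restrict (s := B)) hGm.aestronglyMeasurable ?_
    filter_upwards [ae_restrict_mem hBm] with y hy
    rw [Real.norm_eq_abs (M * _)]
    exact le_trans (hGBbd y hy) (le_abs_self _)
  -- the three radial integrals over E3'
  have hI1 : ∫ y : E3', ψ1 ‖x - y‖ ≤ 3*V*((R/4)*(R/4)) := by
    rw [integral_sub_left_eq_self (fun z : E3' => ψ1 ‖z‖) volume x, radial_integral' ψ1, ← hVdef]
    have hval : ∫ r in Ioi (0:ℝ), r^2*ψ1 r ≤ (R/4)*(R/4) := by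
      refine le_trans hψ1piece.2 ?_
      have hle := vol_Icc_inter (show (0:ℝ) ≤ R/4 by linarith)
      rw [sub_zero] at hle
      exact mul_le_mul_of_nonneg_left hle (by linarith)
    exact mul_le_mul_of_nonneg_left hval (by positivity)
  have hI2 : ∫ y : E3', φ2 ‖y‖ ≤ 3*V*(12/R) := by
    rw [radial_integral' φ2, ← hVdef]
    have hval : ∫ r in Ioi (0:ℝ), r^2*φ2 r ≤ 12/R := by
      refine le_trans hφ2piece.2 ?_
      have hle := vol_Icc_inter (show R/2 ≤ 2*R by linarith)
      calc (8/R^2) * (volume (Icc (R/2) (2*R) ∩ Ioi 0)).toReal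
          ≤ (8/R^2) * (2*R - R/2) := mul_le_mul_of_nonneg_left hle (by positivity)
        _ = 12/R := by
            field_simp
            ring
    exact mul_le_mul_of_nonneg_left hval (by positivity)
  have hI3 : ∫ y : E3', φ3 ‖y‖ = 3*V*(1/R) := by
    rw [radial_integral' φ3, hφ3val, ← hVdef]
  -- bound on the B integral
  have hBbound : ‖∫ y in B, G y‖
      ≤ M * ((8/R^3) * (3*V*((R/4)*(R/4))) + 3*V*(12/R) + 3*V*(1/R)) := by
    calc ‖∫ y in B, G y‖ ≤ ∫ y in B, ‖G y‖ := norm_integral_le_integral_norm _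
      _ ≤ ∫ y in B, M * ((8/R^3) * ψ1 ‖x - y‖ + φ2 ‖y‖ + φ3 ‖y‖) :=
          setIntegral_mono_on hGB.norm hΦint.integrableOn hBm hGBbd
      _ ≤ ∫ y : E3', M * ((8/R^3) * ψ1 ‖x - y‖ + φ2 ‖y‖ + φ3 ‖y‖) :=
          setIntegral_le_integral hΦint (Filter.Eventually.of_forall hΦnn)
      _ = M * ((8/R^3) * (∫ y : E3', ψ1 ‖x - y‖) + (∫ y : E3', φ2 ‖y‖) + (∫ y : E3', φ3 ‖y‖)) := by
          have hf1 : Integrable (fun y : E3' => (8/R^3) * ψ1 ‖x - y‖) := hψ1E.const_mul _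
          have hf12 : Integrable (fun y : E3' => (8/R^3) * ψ1 ‖x - y‖ + φ2 ‖y‖) := hf1.add hφ2E
          rw [integral_const_mul, integral_add hf12 hφ3E, integral_add hf1 hφ2E,
            integral_const_mul]
      _ ≤ M * ((8/R^3) * (3*V*((R/4)*(R/4))) + 3*V*(12/R) + 3*V*(1/R)) := by
          refine mul_le_mul_of_nonneg_left ?_ hM
          have h1 : (8/R^3) * (∫ y : E3', ψ1 ‖x - y‖) ≤ (8/R^3) * (3*V*((R/4)*(R/4))) :=
            mul_le_mul_of_nonneg_left hI1 (by positivity)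
          linarith [hI2, hI3.le]
  -- put everything together
  rw [hDsplit, setIntegral_union hdisj hBm hGA hGB]
  calc ‖(∫ y in A, G y) + ∫ y in B, G y‖ ≤ ‖∫ y in A, G y‖ + ‖∫ y in B, G y‖ :=
        norm_add_le _ _
    _ ≤ 3*V*M/R + M * ((8/R^3) * (3*V*((R/4)*(R/4))) + 3*V*(12/R) + 3*V*(1/R)) :=
        add_le_add hAbound hBbound
    _ ≤ 50 * M * V / R := by
        have hMV : 0 ≤ M * V := mul_nonneg hM hV
        have e1 : 3*V*M/R + M * ((8/R^3) * (3*V*((R/4)*(R/4))) + 3*V*(12/R) + 3*V*(1/R))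
            = (87/2) * (M*V) / R := by
          field_simp
          ring
        rw [e1, div_le_div_iff₀ hR0 hR0]
        nlinarith [mul_nonneg hMV hR0.le]
end
end
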